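/- Let N be even and A = ∑_{odd i ≤ N−1} z_i(e_{i,i'−1} − e_{i+1,i'}) with z_i z_{i'−1} = −q^{−N+2} for odd i ≤ N/2 (and the constraint extended symmetrically). Then A² = −q^{−N+2}·id, so A satisfies (A − i q^{−N/2+1})(A + i q^{−N/2+1}) = 0. -/
import Mathlib


open Matrix

/-- The orthogonal T4 quantum point `A = ∑_{odd i ≤ N−1} z_i (e_{i,i'−1} − e_{i+1,i'})`,
`i' = N+1−i`, written with 0-based row index `a`: for `a` even, entry `z_{a+1}` in column
`b` with `a + b + 2 = N`; for `a` odd, entry `−z_a` in column `b` with `a + b = N`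
(indices of `z` are the 1-based odd `i`). -/
noncomputable def Amat (N : ℕ) (z : ℕ → ℂ) : Matrix (Fin N) (Fin N) ℂ :=
  Matrix.of fun a b =>
    if (a : ℕ) % 2 = 0 ∧ (a : ℕ) + (b : ℕ) + 2 = N then z ((a : ℕ) + 1)
    else if (a : ℕ) % 2 = 1 ∧ (a : ℕ) + (b : ℕ) = N then -z (a : ℕ)
    else 0

/-- For even `N` and `z_i z_{N−i} = −q^{−N+2}` (odd `i`), the orthogonal T4 quantum point
satisfies `A² = −q^{−N+2}·1`, i.e. `(A − i q^{−N/2+1})(A + i q^{−N/2+1}) = 0`. -/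
theorem orthogonal_T4_point (N : ℕ) (hN : Even N) (q : ℂ) (hq : q ≠ 0) (z : ℕ → ℂ)
    (hz : ∀ i j : ℕ, i % 2 = 1 → i + j = N → z i * z j = -q ^ (-(N : ℤ) + 2)) :
    Amat N z * Amat N z = (-q ^ (-(N : ℤ) + 2)) • (1 : Matrix (Fin N) (Fin N) ℂ) := by
  obtain ⟨n, hn⟩ := hN
  ext a c
  rw [Matrix.mul_apply, Matrix.smul_apply, Matrix.one_apply]
  have haN : (a : ℕ) < N := a.isLt
  have hcN : (c : ℕ) < N := c.isLt
  simp only [Amat, Matrix.of_apply, smul_eq_mul]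
  rcases Nat.even_or_odd (a : ℕ) with ha | ha
  · have ha2 : (a : ℕ) % 2 = 0 := Nat.even_iff.mp ha
    have hale : (a : ℕ) + 2 ≤ N := by omega
    set b0 : Fin N := ⟨N - (a : ℕ) - 2, by omega⟩ with hb0
    rw [Finset.sum_eq_single b0]
    · have h1 : (a : ℕ) + ((b0 : ℕ)) + 2 = N := by simp only [hb0]; omega
      have hb2 : (b0 : ℕ) % 2 = 0 := by simp only [hb0]; omega
      rw [if_pos ⟨ha2, h1⟩]
      by_cases hc : a = c
      · subst hc
        rw [if_pos ⟨hb2, by omega⟩, if_pos rfl]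
        have := hz ((a : ℕ) + 1) ((b0 : ℕ) + 1) (by omega) (by omega)
        rw [this]; ring
      · have hca : (b0 : ℕ) + (c : ℕ) + 2 ≠ N := by
          intro h
          exact hc (Fin.ext (by omega))
        rw [if_neg (fun h => hca h.2), if_neg (fun h => by omega), if_neg hc]
        ring
    · intro b _ hb
      have hbne : (b : ℕ) ≠ (b0 : ℕ) := fun h => hb (Fin.ext h)
      have : ¬((a : ℕ) % 2 = 0 ∧ (a : ℕ) + (b : ℕ) + 2 = N) := by
        rintro ⟨_, h⟩
        exact hbne (by simp only [hb0]; omega)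
      rw [if_neg this, if_neg (fun h => by omega)]
      ring
    · intro h; exact absurd (Finset.mem_univ b0) h
  · have ha2 : (a : ℕ) % 2 = 1 := Nat.odd_iff.mp ha
    have ha1 : 1 ≤ (a : ℕ) := by omega
    set b0 : Fin N := ⟨N - (a : ℕ), by omega⟩ with hb0
    rw [Finset.sum_eq_single b0]
    · have h1 : (a : ℕ) + (b0 : ℕ) = N := by simp only [hb0]; omega
      have hb2 : (b0 : ℕ) % 2 = 1 := by simp only [hb0]; omega
      rw [if_neg (fun h => by omega), if_pos ⟨ha2, h1⟩]
      by_cases hc : a = c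
      · subst hc
        rw [if_neg (fun h => by omega), if_pos ⟨hb2, by omega⟩, if_pos rfl]
        have := hz (a : ℕ) (b0 : ℕ) ha2 h1
        rw [neg_mul_neg, this]; ring
      · have hca : (b0 : ℕ) + (c : ℕ) ≠ N := by
          intro h
          exact hc (Fin.ext (by omega))
        rw [if_neg (fun h => by omega), if_neg (fun h => hca h.2), if_neg hc]
        ring
    · intro b _ hb
      have hbne : (b : ℕ) ≠ (b0 : ℕ) := fun h => hb (Fin.ext h)
      have h2 : ¬((a : ℕ) % 2 = 1 ∧ (a : ℕ) + (b : ℕ) = N) := by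
        rintro ⟨_, h⟩
        exact hbne (by simp only [hb0]; omega)
      rw [if_neg (fun h => by omega), if_neg h2]
      ring
    · intro h; exact absurd (Finset.mem_univ b0) h
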